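/- Let ā > 0 and let ρ : ℝ → ℝ be twice continuously differentiable, 2π-periodic, with ρ(θ) > 0 for all θ. Let Φ : ℝ² → ℝ satisfy Φ(r cos θ, r sin θ) = ā r² / ρ(θ)² for all r > 0 and θ ∈ ℝ. Then Φ is twice continuously differentiable on ℝ² \ {0}, and for all r > 0 and θ ∈ ℝ the Laplacian of Φ satisfies ΔΦ(r cos θ, r sin θ) = (2ā/ρ(θ)²) · (1 + (3ρ'(θ)² − ρ(θ)ρ''(θ) + ρ(θ)²)/ρ(θ)²). Moreover, if ρ(θ)² + 2ρ'(θ)² − ρ(θ)ρ''(θ) > 0 for all θ, then ΔΦ(r cos θ, r sin θ) > 2ā/ρ(θ)² for all r > 0 and θ ∈ ℝ. -/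

import Mathlib

open Real

/-- First partial derivative (with respect to the first coordinate) of a
function on the plane `ℝ × ℝ`. -/
noncomputable def pderiv1 (f : ℝ × ℝ → ℝ) : ℝ × ℝ → ℝ :=
  fun p => deriv (fun u => f (u, p.2)) p.1

/-- First partial derivative (with respect to the second coordinate) of a
function on the plane `ℝ × ℝ`. -/
noncomputable def pderiv2 (f : ℝ × ℝ → ℝ) : ℝ × ℝ → ℝ :=
  fun p => deriv (fun u => f (p.1, u)) p.2

/-- The Laplacian: sum of the two pure second partial derivatives. -/
noncomputable def planeLaplacian (f : ℝ × ℝ → ℝ) : ℝ × ℝ → ℝ :=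
  fun p => pderiv1 (pderiv1 f) p + pderiv2 (pderiv2 f) p

/-! ### Auxiliary lemmas -/

private lemma hasDerivAt_im' {f : ℝ → ℂ} {f' : ℂ} {x : ℝ} (h : HasDerivAt f f' x) :
    HasDerivAt (fun t => (f t).im) f'.im x := by
  exact Complex.imCLM.hasFDerivAt.comp_hasDerivAt x h

private lemma argSliceX (x y : ℝ) (h : (x:ℂ) + (y:ℂ)*Complex.I ∈ Complex.slitPlane) :
    HasDerivAt (fun t : ℝ => (Complex.log ((t:ℂ) + (y:ℂ)*Complex.I)).im)
      (-y/(x^2+y^2)) x := by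
  have hf : HasDerivAt (fun t : ℝ => ((t:ℂ) + (y:ℂ)*Complex.I)) 1 x := by
    simpa using (Complex.ofRealCLM.hasDerivAt (x := x)).add_const ((y:ℂ)*Complex.I)
  have h2 := hasDerivAt_im' (hf.clog_real h)
  convert h2 using 1
  rw [Complex.div_im]
  simp [Complex.normSq_apply]
  ring

private lemma argSliceY (x y : ℝ) (h : (x:ℂ) + (y:ℂ)*Complex.I ∈ Complex.slitPlane) :
    HasDerivAt (fun t : ℝ => (Complex.log ((x:ℂ) + (t:ℂ)*Complex.I)).im)
      (x/(x^2+y^2)) y := by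
  have hf : HasDerivAt (fun t : ℝ => ((x:ℂ) + (t:ℂ)*Complex.I)) Complex.I y := by
    simpa using ((Complex.ofRealCLM.hasDerivAt (x := y)).mul_const Complex.I).const_add (x:ℂ)
  have h2 := hasDerivAt_im' (hf.clog_real h)
  convert h2 using 1
  rw [Complex.div_im]
  simp [Complex.normSq_apply]
  ring

private lemma argSliceXneg (x y : ℝ)
    (h : ((-x:ℝ):ℂ) + ((-y:ℝ):ℂ)*Complex.I ∈ Complex.slitPlane) :
    HasDerivAt (fun t : ℝ => (Complex.log (((-t:ℝ):ℂ) + ((-y:ℝ):ℂ)*Complex.I)).im)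
      (-y/(x^2+y^2)) x := by
  have hf : HasDerivAt (fun t : ℝ => (((-t:ℝ):ℂ) + ((-y:ℝ):ℂ)*Complex.I)) (-1) x := by
    have h0 : HasDerivAt (fun t : ℝ => ((t:ℂ))) 1 x := Complex.ofRealCLM.hasDerivAt
    simpa using (h0.neg.add_const (((-y:ℝ):ℂ)*Complex.I))
  have h2 := hasDerivAt_im' (hf.clog_real h)
  convert h2 using 1
  rw [Complex.div_im]
  simp [Complex.normSq_apply]
  ring

private lemma argSliceYneg (x y : ℝ)
    (h : ((-x:ℝ):ℂ) + ((-y:ℝ):ℂ)*Complex.I ∈ Complex.slitPlane) :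
    HasDerivAt (fun t : ℝ => (Complex.log (((-x:ℝ):ℂ) + ((-t:ℝ):ℂ)*Complex.I)).im)
      (x/(x^2+y^2)) y := by
  have hf : HasDerivAt (fun t : ℝ => (((-x:ℝ):ℂ) + ((-t:ℝ):ℂ)*Complex.I)) (-Complex.I) y := by
    have h0 : HasDerivAt (fun t : ℝ => ((t:ℂ))) 1 y := Complex.ofRealCLM.hasDerivAt
    simpa using ((h0.neg.mul_const Complex.I).const_add (((-x:ℝ):ℂ)))
  have h2 := hasDerivAt_im' (hf.clog_real h)
  convert h2 using 1
  rw [Complex.div_im]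
  simp [Complex.normSq_apply]
  ring

/-- The main workhorse: if `Φ = (x²+y²)·g(A)` on an open set `U` on which the angle
function `A` has the polar-coordinate partial derivatives, then `Φ` is `C²` at points
of `U` and its Laplacian is `4 g (A p) + g'' (A p)`. -/
private lemma chart_lap
    (g g1 g2 : ℝ → ℝ) (hg : ContDiff ℝ 2 g)
    (hg1 : ∀ t, HasDerivAt g (g1 t) t)
    (hg2 : ∀ t, HasDerivAt g1 (g2 t) t)
    (Φ : ℝ × ℝ → ℝ) (U : Set (ℝ × ℝ)) (hU : IsOpen U)
    (A : ℝ × ℝ → ℝ)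
    (hAc : ∀ p ∈ U, ContDiffAt ℝ 2 A p)
    (hq : ∀ p ∈ U, p.1 ^ 2 + p.2 ^ 2 ≠ 0)
    (hA1 : ∀ p ∈ U, HasDerivAt (fun x => A (x, p.2)) (-p.2 / (p.1 ^ 2 + p.2 ^ 2)) p.1)
    (hA2 : ∀ p ∈ U, HasDerivAt (fun y => A (p.1, y)) (p.1 / (p.1 ^ 2 + p.2 ^ 2)) p.2)
    (hΦU : ∀ p ∈ U, Φ p = (p.1 ^ 2 + p.2 ^ 2) * g (A p))
    {p₀ : ℝ × ℝ} (hp₀ : p₀ ∈ U) :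
    ContDiffAt ℝ 2 Φ p₀ ∧ planeLaplacian Φ p₀ = 4 * g (A p₀) + g2 (A p₀) := by
  have hmemX : ∀ p ∈ U, ∀ᶠ x in nhds p.1, (x, p.2) ∈ U := by
    intro p hp
    have hc : Continuous (fun x : ℝ => ((x, p.2) : ℝ × ℝ)) :=
      continuous_id.prodMk continuous_const
    exact hc.continuousAt.preimage_mem_nhds (hU.mem_nhds hp)
  have hmemY : ∀ p ∈ U, ∀ᶠ y in nhds p.2, (p.1, y) ∈ U := by
    intro p hp
    have hc : Continuous (fun y : ℝ => ((p.1, y) : ℝ × ℝ)) :=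
      continuous_const.prodMk continuous_id
    exact hc.continuousAt.preimage_mem_nhds (hU.mem_nhds hp)
  constructor
  · have hΨ : ContDiffAt ℝ 2 (fun p : ℝ × ℝ => (p.1 ^ 2 + p.2 ^ 2) * g (A p)) p₀ := by
      have h1 : ContDiffAt ℝ 2 (fun p : ℝ × ℝ => p.1 ^ 2 + p.2 ^ 2) p₀ :=
        (((contDiff_fst (E := ℝ) (F := ℝ) (𝕜 := ℝ)).pow 2).add
          ((contDiff_snd).pow 2)).contDiffAt
      exact h1.mul ((hg.contDiffAt).comp p₀ (hAc p₀ hp₀))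
    exact hΨ.congr_of_eventuallyEq (Filter.eventuallyEq_of_mem (hU.mem_nhds hp₀) hΦU)
  · have key1 : ∀ p ∈ U,
        HasDerivAt (fun x => Φ (x, p.2)) (2 * p.1 * g (A p) - p.2 * g1 (A p)) p.1 := by
      intro p hp
      have hgA : HasDerivAt (fun x => g (A (x, p.2)))
          (g1 (A p) * (-p.2 / (p.1 ^ 2 + p.2 ^ 2))) p.1 :=
        (hg1 (A p)).comp p.1 (hA1 p hp)
      have hx2 : HasDerivAt (fun x : ℝ => x ^ 2 + p.2 ^ 2) (2 * p.1) p.1 := by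
        simpa using (hasDerivAt_pow 2 p.1).add_const (p.2 ^ 2)
      have hΨ := hx2.mul hgA
      have heq : (fun x => Φ (x, p.2)) =ᶠ[nhds p.1]
          fun x => (x ^ 2 + p.2 ^ 2) * g (A (x, p.2)) := by
        filter_upwards [hmemX p hp] with x hx using hΦU (x, p.2) hx
      have h := hΨ.congr_of_eventuallyEq heq
      refine h.congr_deriv ?_
      have hqp := hq p hp
      field_simp
      ring
    have key2 : ∀ p ∈ U,
        HasDerivAt (fun y => Φ (p.1, y)) (2 * p.2 * g (A p) + p.1 * g1 (A p)) p.2 := by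
      intro p hp
      have hgA : HasDerivAt (fun y => g (A (p.1, y)))
          (g1 (A p) * (p.1 / (p.1 ^ 2 + p.2 ^ 2))) p.2 :=
        (hg1 (A p)).comp p.2 (hA2 p hp)
      have hy2 : HasDerivAt (fun y : ℝ => p.1 ^ 2 + y ^ 2) (2 * p.2) p.2 := by
        simpa using ((hasDerivAt_pow 2 p.2).const_add (p.1 ^ 2))
      have hΨ := hy2.mul hgA
      have heq : (fun y => Φ (p.1, y)) =ᶠ[nhds p.2]
          fun y => (p.1 ^ 2 + y ^ 2) * g (A (p.1, y)) := by
        filter_upwards [hmemY p hp] with y hy using hΦU (p.1, y) hy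
      have h := hΨ.congr_of_eventuallyEq heq
      refine h.congr_deriv ?_
      have hqp := hq p hp
      field_simp
    have pd1 : ∀ p ∈ U, pderiv1 Φ p = 2 * p.1 * g (A p) - p.2 * g1 (A p) := by
      intro p hp; exact (key1 p hp).deriv
    have pd2 : ∀ p ∈ U, pderiv2 Φ p = 2 * p.2 * g (A p) + p.1 * g1 (A p) := by
      intro p hp; exact (key2 p hp).deriv
    have key11 : HasDerivAt (fun x => pderiv1 Φ (x, p₀.2))
        (2 * g (A p₀) + 2 * p₀.1 * (g1 (A p₀) * (-p₀.2 / (p₀.1 ^ 2 + p₀.2 ^ 2)))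
          - p₀.2 * (g2 (A p₀) * (-p₀.2 / (p₀.1 ^ 2 + p₀.2 ^ 2)))) p₀.1 := by
      have hgA : HasDerivAt (fun x => g (A (x, p₀.2)))
          (g1 (A p₀) * (-p₀.2 / (p₀.1 ^ 2 + p₀.2 ^ 2))) p₀.1 :=
        (hg1 (A p₀)).comp p₀.1 (hA1 p₀ hp₀)
      have hg1A : HasDerivAt (fun x => g1 (A (x, p₀.2)))
          (g2 (A p₀) * (-p₀.2 / (p₀.1 ^ 2 + p₀.2 ^ 2))) p₀.1 :=
        (hg2 (A p₀)).comp p₀.1 (hA1 p₀ hp₀)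
      have hlin : HasDerivAt (fun x : ℝ => 2 * x) 2 p₀.1 := by
        simpa using (hasDerivAt_id p₀.1).const_mul 2
      have hF := (hlin.fun_mul hgA).fun_sub (hg1A.const_mul p₀.2)
      have hF' : HasDerivAt (fun x => 2 * x * g (A (x, p₀.2)) - p₀.2 * g1 (A (x, p₀.2)))
          (2 * g (A p₀) + 2 * p₀.1 * (g1 (A p₀) * (-p₀.2 / (p₀.1 ^ 2 + p₀.2 ^ 2)))
            - p₀.2 * (g2 (A p₀) * (-p₀.2 / (p₀.1 ^ 2 + p₀.2 ^ 2)))) p₀.1 := by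
        refine hF.congr_deriv ?_
        ring
      apply hF'.congr_of_eventuallyEq
      filter_upwards [hmemX p₀ hp₀] with x hx
      exact pd1 (x, p₀.2) hx
    have key22 : HasDerivAt (fun y => pderiv2 Φ (p₀.1, y))
        (2 * g (A p₀) + 2 * p₀.2 * (g1 (A p₀) * (p₀.1 / (p₀.1 ^ 2 + p₀.2 ^ 2)))
          + p₀.1 * (g2 (A p₀) * (p₀.1 / (p₀.1 ^ 2 + p₀.2 ^ 2)))) p₀.2 := by
      have hgA : HasDerivAt (fun y => g (A (p₀.1, y)))
          (g1 (A p₀) * (p₀.1 / (p₀.1 ^ 2 + p₀.2 ^ 2))) p₀.2 :=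
        (hg1 (A p₀)).comp p₀.2 (hA2 p₀ hp₀)
      have hg1A : HasDerivAt (fun y => g1 (A (p₀.1, y)))
          (g2 (A p₀) * (p₀.1 / (p₀.1 ^ 2 + p₀.2 ^ 2))) p₀.2 :=
        (hg2 (A p₀)).comp p₀.2 (hA2 p₀ hp₀)
      have hlin : HasDerivAt (fun y : ℝ => 2 * y) 2 p₀.2 := by
        simpa using (hasDerivAt_id p₀.2).const_mul 2
      have hF := (hlin.fun_mul hgA).fun_add (hg1A.const_mul p₀.1)
      have hF' : HasDerivAt (fun y => 2 * y * g (A (p₀.1, y)) + p₀.1 * g1 (A (p₀.1, y)))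
          (2 * g (A p₀) + 2 * p₀.2 * (g1 (A p₀) * (p₀.1 / (p₀.1 ^ 2 + p₀.2 ^ 2)))
            + p₀.1 * (g2 (A p₀) * (p₀.1 / (p₀.1 ^ 2 + p₀.2 ^ 2)))) p₀.2 := by
        refine hF.congr_deriv ?_
        ring
      apply hF'.congr_of_eventuallyEq
      filter_upwards [hmemY p₀ hp₀] with y hy
      exact pd2 (p₀.1, y) hy
    have e1 : pderiv1 (pderiv1 Φ) p₀ = _ := key11.deriv
    have e2 : pderiv2 (pderiv2 Φ) p₀ = _ := key22.deriv
    show pderiv1 (pderiv1 Φ) p₀ + pderiv2 (pderiv2 Φ) p₀ = _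
    rw [e1, e2]
    have hqp := hq p₀ hp₀
    field_simp
    ring

private noncomputable def gfun (a : ℝ) (ρ : ℝ → ℝ) : ℝ → ℝ := fun t => a / ρ t ^ 2
private noncomputable def g1fun (a : ℝ) (ρ : ℝ → ℝ) : ℝ → ℝ :=
  fun t => -2 * a * deriv ρ t / ρ t ^ 3
private noncomputable def g2fun (a : ℝ) (ρ : ℝ → ℝ) : ℝ → ℝ :=
  fun t => 6 * a * deriv ρ t ^ 2 / ρ t ^ 4 - 2 * a * deriv (deriv ρ) t / ρ t ^ 3

private lemma rho_hasDeriv (ρ : ℝ → ℝ) (hρ : ContDiff ℝ 2 ρ) :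
    ∀ t, HasDerivAt ρ (deriv ρ t) t := fun t =>
  ((hρ.differentiable (by norm_num)) t).hasDerivAt

private lemma rho_hasDeriv2 (ρ : ℝ → ℝ) (hρ : ContDiff ℝ 2 ρ) :
    ∀ t, HasDerivAt (deriv ρ) (deriv (deriv ρ) t) t := by
  have h2 : ContDiff ℝ (1 + 1) ρ := by norm_num at hρ ⊢; exact hρ
  have h1 : ContDiff ℝ 1 (deriv ρ) := (contDiff_succ_iff_deriv.mp h2).2.2
  exact fun t => ((h1.differentiable one_ne_zero) t).hasDerivAt

private lemma gfun_contDiff (a : ℝ) (ρ : ℝ → ℝ) (hρ : ContDiff ℝ 2 ρ) (hpos : ∀ t, 0 < ρ t) :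
    ContDiff ℝ 2 (gfun a ρ) :=
  contDiff_const.div (hρ.pow 2) (fun t => pow_ne_zero 2 (hpos t).ne')

private lemma gfun_deriv (a : ℝ) (ρ : ℝ → ℝ) (hρ : ContDiff ℝ 2 ρ) (hpos : ∀ t, 0 < ρ t) :
    ∀ t, HasDerivAt (gfun a ρ) (g1fun a ρ t) t := by
  intro t
  have hd : HasDerivAt (fun x => ρ x ^ 2) (2 * ρ t ^ 1 * deriv ρ t) t :=
    (rho_hasDeriv ρ hρ t).pow 2
  have h := (hasDerivAt_const t a).div hd (pow_ne_zero 2 (hpos t).ne')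
  have hne := (hpos t).ne'
  refine h.congr_deriv ?_
  simp only [g1fun]
  field_simp
  ring

private lemma g1fun_deriv (a : ℝ) (ρ : ℝ → ℝ) (hρ : ContDiff ℝ 2 ρ) (hpos : ∀ t, 0 < ρ t) :
    ∀ t, HasDerivAt (g1fun a ρ) (g2fun a ρ t) t := by
  intro t
  have hn : HasDerivAt (fun x => -2 * a * deriv ρ x) (-2 * a * deriv (deriv ρ) t) t :=
    (rho_hasDeriv2 ρ hρ t).const_mul (-2 * a)
  have hd : HasDerivAt (fun x => ρ x ^ 3) (3 * ρ t ^ 2 * deriv ρ t) t := by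
    have h := (rho_hasDeriv ρ hρ t).pow 3; norm_num at h; exact h
  have h := hn.div hd (pow_ne_zero 3 (hpos t).ne')
  have hne := (hpos t).ne'
  refine h.congr_deriv ?_
  simp only [g2fun]
  field_simp
  ring

private lemma periodic_deriv' (f : ℝ → ℝ) (c : ℝ) (h : Function.Periodic f c) :
    Function.Periodic (deriv f) c := by
  intro x
  have h1 : deriv (fun y => f (y + c)) x = deriv f (x + c) := deriv_comp_add_const f c x
  rw [← h1]
  congr 1
  funext y
  exact h y

private lemma angle_eq' (α θ : ℝ) (hc : Real.cos α = Real.cos θ) (hs : Real.sin α = Real.sin θ) :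
    ∃ k : ℤ, α = θ + k * (2 * π) := by
  have hexp : Complex.exp (α * Complex.I) = Complex.exp (θ * Complex.I) := by
    rw [Complex.exp_mul_I, Complex.exp_mul_I, ← Complex.ofReal_cos, ← Complex.ofReal_cos,
      ← Complex.ofReal_sin, ← Complex.ofReal_sin, hc, hs]
  obtain ⟨n, hn⟩ := Complex.exp_eq_exp_iff_exists_int.mp hexp
  refine ⟨n, ?_⟩
  have him := congrArg Complex.im hn
  simpa using him

theorem laplacian_of_polar_weight
    (abar : ℝ) (habar : 0 < abar)
    (ρ : ℝ → ℝ) (hρ : ContDiff ℝ 2 ρ)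
    (hper : Function.Periodic ρ (2 * π))
    (hpos : ∀ θ : ℝ, 0 < ρ θ)
    (Φ : ℝ × ℝ → ℝ)
    (hΦ : ∀ r : ℝ, 0 < r → ∀ θ : ℝ,
      Φ (r * cos θ, r * sin θ) = abar * r ^ 2 / ρ θ ^ 2) :
    ContDiffOn ℝ 2 Φ ({(0 : ℝ × ℝ)}ᶜ) ∧
    (∀ r : ℝ, 0 < r → ∀ θ : ℝ,
      planeLaplacian Φ (r * cos θ, r * sin θ)
        = (2 * abar / ρ θ ^ 2)
            * (1 + (3 * deriv ρ θ ^ 2 - ρ θ * deriv (deriv ρ) θ + ρ θ ^ 2) / ρ θ ^ 2)) ∧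
    ((∀ θ : ℝ, 0 < ρ θ ^ 2 + 2 * deriv ρ θ ^ 2 - ρ θ * deriv (deriv ρ) θ) →
      ∀ r : ℝ, 0 < r → ∀ θ : ℝ,
        2 * abar / ρ θ ^ 2 < planeLaplacian Φ (r * cos θ, r * sin θ)) := by
  have hg := gfun_contDiff abar ρ hρ hpos
  have hg1 := gfun_deriv abar ρ hρ hpos
  have hg2 := g1fun_deriv abar ρ hρ hpos
  -- Chart 1 : the slit plane {0 < x ∨ y ≠ 0}
  set U₁ : Set (ℝ × ℝ) := {p | 0 < p.1 ∨ p.2 ≠ 0} with hU₁def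
  have hU₁ : IsOpen U₁ := by
    apply IsOpen.union
    · exact isOpen_lt continuous_const continuous_fst
    · exact isOpen_ne.preimage continuous_snd
  have hslit1 : ∀ p ∈ U₁, ((p.1:ℂ) + (p.2:ℂ)*Complex.I) ∈ Complex.slitPlane := by
    intro p hp
    rw [Complex.mem_slitPlane_iff]
    have hp' : 0 < p.1 ∨ p.2 ≠ 0 := hp
    simpa using hp'
  set A₁ : ℝ × ℝ → ℝ := fun p => (Complex.log ((p.1:ℂ) + (p.2:ℂ)*Complex.I)).im with hA₁def
  have hq₁ : ∀ p ∈ U₁, p.1 ^ 2 + p.2 ^ 2 ≠ 0 := by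
    intro p hp
    rcases hp with h | h
    · nlinarith [sq_nonneg p.2]
    · have : 0 < p.2 ^ 2 := by positivity
      nlinarith [sq_nonneg p.1]
  have hAc₁ : ∀ p ∈ U₁, ContDiffAt ℝ 2 A₁ p := by
    intro p hp
    have hz : ContDiff ℝ 2 (fun q : ℝ × ℝ => (q.1:ℂ) + (q.2:ℂ)*Complex.I) :=
      (Complex.ofRealCLM.contDiff.comp contDiff_fst).add
        ((Complex.ofRealCLM.contDiff.comp contDiff_snd).mul contDiff_const)
    have hlog : ContDiffAt ℝ 2 Complex.log ((p.1:ℂ) + (p.2:ℂ)*Complex.I) :=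
      (Complex.contDiffAt_log (hslit1 p hp)).restrict_scalars ℝ
    exact Complex.imCLM.contDiff.contDiffAt.comp _ (hlog.comp p hz.contDiffAt)
  have hA₁1 : ∀ p ∈ U₁, HasDerivAt (fun x => A₁ (x, p.2)) (-p.2 / (p.1 ^ 2 + p.2 ^ 2)) p.1 :=
    fun p hp => argSliceX p.1 p.2 (hslit1 p hp)
  have hA₁2 : ∀ p ∈ U₁, HasDerivAt (fun y => A₁ (p.1, y)) (p.1 / (p.1 ^ 2 + p.2 ^ 2)) p.2 :=
    fun p hp => argSliceY p.1 p.2 (hslit1 p hp)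
  have habs1 : ∀ p ∈ U₁, ‖((p.1:ℂ) + (p.2:ℂ)*Complex.I)‖
      = Real.sqrt (p.1 ^ 2 + p.2 ^ 2) := by
    intro p hp
    rw [Complex.norm_def]
    congr 1
    simp [Complex.normSq_apply]
    ring
  have hΦU₁ : ∀ p ∈ U₁, Φ p = (p.1 ^ 2 + p.2 ^ 2) * gfun abar ρ (A₁ p) := by
    intro p hp
    set z : ℂ := (p.1:ℂ) + (p.2:ℂ)*Complex.I with hzdef
    have hz0 : z ≠ 0 := Complex.slitPlane_ne_zero (hslit1 p hp)
    have hr : 0 < ‖z‖ := norm_pos_iff.mpr hz0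
    have hA : A₁ p = Complex.arg z := Complex.log_im z
    have hcos : ‖z‖ * Real.cos (Complex.arg z) = p.1 := by
      rw [Complex.norm_mul_cos_arg]; simp [hzdef]
    have hsin : ‖z‖ * Real.sin (Complex.arg z) = p.2 := by
      rw [Complex.norm_mul_sin_arg]; simp [hzdef]
    have hΦv := hΦ ‖z‖ hr (Complex.arg z)
    rw [hcos, hsin] at hΦv
    have hr2 : ‖z‖ ^ 2 = p.1 ^ 2 + p.2 ^ 2 := by
      rw [Complex.sq_norm]
      simp [Complex.normSq_apply, hzdef]
      ring
    rw [Prod.mk.eta] at hΦv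
    rw [hΦv, hA, hr2, gfun]
    ring
  -- Chart 2 : the opposite slit plane {x < 0 ∨ y ≠ 0}
  set U₂ : Set (ℝ × ℝ) := {p | p.1 < 0 ∨ p.2 ≠ 0} with hU₂def
  have hU₂ : IsOpen U₂ := by
    apply IsOpen.union
    · exact isOpen_lt continuous_fst continuous_const
    · exact isOpen_ne.preimage continuous_snd
  have hslit2 : ∀ p ∈ U₂, (((-p.1:ℝ):ℂ) + ((-p.2:ℝ):ℂ)*Complex.I) ∈ Complex.slitPlane := by
    intro p hp
    rw [Complex.mem_slitPlane_iff]
    simp only [Complex.add_re, Complex.ofReal_re, Complex.mul_re, Complex.I_re, Complex.I_im,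
      Complex.ofReal_im, Complex.add_im, Complex.mul_im]
    rcases hp with h | h
    · left; simpa using h
    · right; simpa using h
  set A₂ : ℝ × ℝ → ℝ :=
    fun p => π + (Complex.log (((-p.1:ℝ):ℂ) + ((-p.2:ℝ):ℂ)*Complex.I)).im with hA₂def
  have hq₂ : ∀ p ∈ U₂, p.1 ^ 2 + p.2 ^ 2 ≠ 0 := by
    intro p hp
    rcases hp with h | h
    · nlinarith [sq_nonneg p.2]
    · have : 0 < p.2 ^ 2 := by positivity
      nlinarith [sq_nonneg p.1]
  have hAc₂ : ∀ p ∈ U₂, ContDiffAt ℝ 2 A₂ p := by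
    intro p hp
    have hz : ContDiff ℝ 2 (fun q : ℝ × ℝ => ((-q.1:ℝ):ℂ) + ((-q.2:ℝ):ℂ)*Complex.I) := by
      apply ContDiff.add
      · exact Complex.ofRealCLM.contDiff.comp (contDiff_fst.neg)
      · exact (Complex.ofRealCLM.contDiff.comp (contDiff_snd.neg)).mul contDiff_const
    have hlog : ContDiffAt ℝ 2 Complex.log (((-p.1:ℝ):ℂ) + ((-p.2:ℝ):ℂ)*Complex.I) :=
      (Complex.contDiffAt_log (hslit2 p hp)).restrict_scalars ℝ
    have h3 : ContDiffAt ℝ 2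
        (fun q : ℝ × ℝ => (Complex.log (((-q.1:ℝ):ℂ) + ((-q.2:ℝ):ℂ)*Complex.I)).im) p :=
      by exact Complex.imCLM.contDiff.contDiffAt.comp _ (hlog.comp p hz.contDiffAt)
    exact contDiffAt_const.add h3
  have hA₂1 : ∀ p ∈ U₂, HasDerivAt (fun x => A₂ (x, p.2)) (-p.2 / (p.1 ^ 2 + p.2 ^ 2)) p.1 :=
    fun p hp => (argSliceXneg p.1 p.2 (hslit2 p hp)).const_add π
  have hA₂2 : ∀ p ∈ U₂, HasDerivAt (fun y => A₂ (p.1, y)) (p.1 / (p.1 ^ 2 + p.2 ^ 2)) p.2 :=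
    fun p hp => (argSliceYneg p.1 p.2 (hslit2 p hp)).const_add π
  have hΦU₂ : ∀ p ∈ U₂, Φ p = (p.1 ^ 2 + p.2 ^ 2) * gfun abar ρ (A₂ p) := by
    intro p hp
    set w : ℂ := ((-p.1:ℝ):ℂ) + ((-p.2:ℝ):ℂ)*Complex.I with hwdef
    have hw0 : w ≠ 0 := Complex.slitPlane_ne_zero (hslit2 p hp)
    have hr : 0 < ‖w‖ := norm_pos_iff.mpr hw0
    have hA : A₂ p = π + Complex.arg w := by rw [hA₂def]; simp [Complex.log_im, hwdef]
    have hcos : ‖w‖ * Real.cos (π + Complex.arg w) = p.1 := by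
      rw [Real.cos_add]
      simp only [Real.cos_pi, Real.sin_pi]
      have := Complex.norm_mul_cos_arg w
      have hre : w.re = -p.1 := by simp [hwdef]
      nlinarith [this, hre]
    have hsin : ‖w‖ * Real.sin (π + Complex.arg w) = p.2 := by
      rw [Real.sin_add]
      simp only [Real.cos_pi, Real.sin_pi]
      have := Complex.norm_mul_sin_arg w
      have him : w.im = -p.2 := by simp [hwdef]
      nlinarith [this, him]
    have hΦv := hΦ ‖w‖ hr (π + Complex.arg w)
    rw [hcos, hsin] at hΦv
    have hr2 : ‖w‖ ^ 2 = p.1 ^ 2 + p.2 ^ 2 := by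
      rw [Complex.sq_norm]
      simp [Complex.normSq_apply, hwdef]
      ring
    rw [Prod.mk.eta] at hΦv
    rw [hΦv, hA, hr2, gfun]
    ring
  -- The main pointwise statement
  have main : ∀ p : ℝ × ℝ, p ≠ 0 → ContDiffAt ℝ 2 Φ p ∧ ∃ α : ℝ,
      Real.sqrt (p.1 ^ 2 + p.2 ^ 2) * Real.cos α = p.1 ∧
      Real.sqrt (p.1 ^ 2 + p.2 ^ 2) * Real.sin α = p.2 ∧
      planeLaplacian Φ p = 4 * gfun abar ρ α + g2fun abar ρ α := by
    intro p hp
    have hcase : (0 < p.1 ∨ p.2 ≠ 0) ∨ (p.1 < 0 ∨ p.2 ≠ 0) := by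
      by_cases h2 : p.2 = 0
      · have h1 : p.1 ≠ 0 := by
          intro h1
          exact hp (Prod.ext h1 h2)
        rcases h1.lt_or_gt with h | h
        · right; left; exact h
        · left; left; exact h
      · left; right; exact h2
    rcases hcase with hp1 | hp2
    · have hres := chart_lap (gfun abar ρ) (g1fun abar ρ) (g2fun abar ρ) hg hg1 hg2
        Φ U₁ hU₁ A₁ hAc₁ hq₁ hA₁1 hA₁2 hΦU₁ hp1
      refine ⟨hres.1, A₁ p, ?_, ?_, hres.2⟩
      · rw [← habs1 p hp1]
        have : A₁ p = Complex.arg ((p.1:ℂ) + (p.2:ℂ)*Complex.I) := Complex.log_im _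
        rw [this, Complex.norm_mul_cos_arg]
        simp
      · rw [← habs1 p hp1]
        have : A₁ p = Complex.arg ((p.1:ℂ) + (p.2:ℂ)*Complex.I) := Complex.log_im _
        rw [this, Complex.norm_mul_sin_arg]
        simp
    · have hres := chart_lap (gfun abar ρ) (g1fun abar ρ) (g2fun abar ρ) hg hg1 hg2
        Φ U₂ hU₂ A₂ hAc₂ hq₂ hA₂1 hA₂2 hΦU₂ hp2
      set w : ℂ := ((-p.1:ℝ):ℂ) + ((-p.2:ℝ):ℂ)*Complex.I with hwdef
      have habs2 : ‖w‖ = Real.sqrt (p.1 ^ 2 + p.2 ^ 2) := by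
        rw [Complex.norm_def]
        congr 1
        simp [Complex.normSq_apply, hwdef]
        ring
      have hA : A₂ p = π + Complex.arg w := by rw [hA₂def]; simp [Complex.log_im, hwdef]
      refine ⟨hres.1, A₂ p, ?_, ?_, hres.2⟩
      · rw [← habs2, hA, Real.cos_add]
        simp only [Real.cos_pi, Real.sin_pi]
        have h1 := Complex.norm_mul_cos_arg w
        have hre : w.re = -p.1 := by simp [hwdef]
        nlinarith [h1, hre]
      · rw [← habs2, hA, Real.sin_add]
        simp only [Real.cos_pi, Real.sin_pi]
        have h1 := Complex.norm_mul_sin_arg w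
        have him : w.im = -p.2 := by simp [hwdef]
        nlinarith [h1, him]
  -- periodicity of the derivatives
  have hper1 : Function.Periodic (deriv ρ) (2 * π) := periodic_deriv' ρ (2 * π) hper
  have hper2 : Function.Periodic (deriv (deriv ρ)) (2 * π) := periodic_deriv' _ (2 * π) hper1
  -- Part 2 : the Laplacian formula
  have part2 : ∀ r : ℝ, 0 < r → ∀ θ : ℝ,
      planeLaplacian Φ (r * cos θ, r * sin θ)
        = (2 * abar / ρ θ ^ 2)
            * (1 + (3 * deriv ρ θ ^ 2 - ρ θ * deriv (deriv ρ) θ + ρ θ ^ 2) / ρ θ ^ 2) := by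
    intro r hr θ
    set p : ℝ × ℝ := (r * cos θ, r * sin θ) with hpdef
    have hsc := Real.sin_sq_add_cos_sq θ
    have hq : p.1 ^ 2 + p.2 ^ 2 = r ^ 2 := by
      simp only [hpdef]
      linear_combination r ^ 2 * hsc
    have hp0 : p ≠ 0 := by
      intro h
      rw [Prod.ext_iff] at h
      simp only [hpdef, Prod.fst_zero, Prod.snd_zero] at h
      have h1 : cos θ = 0 := by
        have := h.1
        exact (mul_eq_zero.mp this).resolve_left hr.ne'
      have h2 : sin θ = 0 := by
        have := h.2
        exact (mul_eq_zero.mp this).resolve_left hr.ne'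
      rw [h1, h2] at hsc
      norm_num at hsc
    obtain ⟨hcd, α, hcos, hsin, hlap⟩ := main p hp0
    rw [hq] at hcos hsin
    rw [Real.sqrt_sq hr.le] at hcos hsin
    have hcos' : Real.cos α = Real.cos θ := by
      have : r * Real.cos α = r * Real.cos θ := by
        rw [hcos]
      exact mul_left_cancel₀ hr.ne' this
    have hsin' : Real.sin α = Real.sin θ := by
      have : r * Real.sin α = r * Real.sin θ := by
        rw [hsin]
      exact mul_left_cancel₀ hr.ne' this
    obtain ⟨k, hk⟩ := angle_eq' α θ hcos' hsin'
    have hρα : ρ α = ρ θ := by rw [hk]; exact (hper.int_mul k) θ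
    have hρ'α : deriv ρ α = deriv ρ θ := by rw [hk]; exact (hper1.int_mul k) θ
    have hρ''α : deriv (deriv ρ) α = deriv (deriv ρ) θ := by
      rw [hk]; exact (hper2.int_mul k) θ
    rw [hlap]
    simp only [gfun, g2fun, hρα, hρ'α, hρ''α]
    have hne := (hpos θ).ne'
    field_simp
    ring
  refine ⟨?_, part2, ?_⟩
  · intro p hp
    have hp0 : p ≠ 0 := by simpa using hp
    exact (main p hp0).1.contDiffWithinAt
  · intro hcurv r hr θ
    rw [part2 r hr θ]
    have hs := hpos θ
    have hkey : 0 < 3 * deriv ρ θ ^ 2 - ρ θ * deriv (deriv ρ) θ + ρ θ ^ 2 := by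
      nlinarith [hcurv θ, sq_nonneg (deriv ρ θ)]
    have hfrac : 0 < (3 * deriv ρ θ ^ 2 - ρ θ * deriv (deriv ρ) θ + ρ θ ^ 2) / ρ θ ^ 2 := by
      positivity
    have hmain : 0 < 2 * abar / ρ θ ^ 2 := by positivity
    nlinarith [hmain, hfrac]
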